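/- arXiv:2210.16211 — 5 statements merged into one kernel-verified Lean document; each statement's English description precedes it below -/
import Mathlib

section
/- If G is a graph with diameter 2, radius 2, and the triangle-property, and G is a minimal counterexample to having at least 2n−3 edges, then δ(G) ≥ 3. More concretely: in any graph G with diam(G) = rad(G) = 2 and the triangle-property, if some vertex has degree 2, then |E(G)| ≥ 2n − 3. -/
open Finset

lemma common_of_dist_le_two {n : ℕ} (G : SimpleGraph (Fin n)) (hconn : G.Connected)
    (hdiam : ∀ u v : Fin n, G.dist u v ≤ 2)
    (x y : Fin n) (hne : x ≠ y) (hadj : ¬ G.Adj x y) :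
    ∃ z, G.Adj x z ∧ G.Adj z y := by
  obtain ⟨p, hp⟩ := hconn.exists_walk_length_eq_dist x y
  have h2 : p.length ≤ 2 := hp ▸ hdiam x y
  match p with
  | .nil => exact absurd rfl hne
  | .cons h .nil => exact absurd h hadj
  | .cons h (.cons h' .nil) => exact ⟨_, h, h'⟩
  | .cons h (.cons h' (.cons h'' q)) => simp [SimpleGraph.Walk.length_cons] at h2

lemma not_adj_of_two_le_dist {n : ℕ} (G : SimpleGraph (Fin n)) {x y : Fin n}
    (h : 2 ≤ G.dist x y) : x ≠ y ∧ ¬ G.Adj x y := by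
  constructor
  · rintro rfl; simp [SimpleGraph.dist_self] at h
  · intro had
    have := G.dist_le had.toWalk
    simp at this; omega

open Finset

lemma aux_one {n : ℕ} (G : SimpleGraph (Fin n)) [DecidableRel G.Adj]
    (htri : ∀ u v : Fin n, G.Adj u v → ∃ w : Fin n, G.Adj u w ∧ G.Adj v w)
    (v a b : Fin n)
    (hNv : ∀ u, G.Adj v u ↔ u = a ∨ u = b)
    (S : Finset (Fin n))
    (hS : ∀ u, u ∈ S ↔ (u ≠ v ∧ u ≠ a ∧ u ≠ b))
    (u : Fin n) (huS : u ∈ S) (hau : G.Adj a u) (hbu : ¬ G.Adj b u) :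
    1 ≤ (G.neighborFinset u ∩ S).card := by
  obtain ⟨z, huz, haz⟩ := htri u a hau.symm
  have hzv : z ≠ v := by
    rintro rfl
    have h2 := (hNv u).1 huz.symm
    rw [hS] at huS
    tauto
  have hza : z ≠ a := by rintro rfl; exact G.loopless.irrefl z haz
  have hzb : z ≠ b := by rintro rfl; exact hbu huz.symm
  have hzS : z ∈ S := (hS z).2 ⟨hzv, hza, hzb⟩
  have : z ∈ G.neighborFinset u ∩ S := by
    simp [SimpleGraph.mem_neighborFinset, huz, hzS]
  exact Finset.card_pos.2 ⟨z, this⟩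


lemma aux_key {n : ℕ} (G : SimpleGraph (Fin n)) [DecidableRel G.Adj]
    (htri : ∀ u v : Fin n, G.Adj u v → ∃ w : Fin n, G.Adj u w ∧ G.Adj v w)
    (hcom : ∀ x y : Fin n, x ≠ y → ¬G.Adj x y → ∃ z, G.Adj x z ∧ G.Adj z y)
    (v a b : Fin n)
    (hNv : ∀ u, G.Adj v u ↔ u = a ∨ u = b)
    (S P : Finset (Fin n)) (wf : Fin n → Fin n)
    (hS : ∀ u, u ∈ S ↔ (u ≠ v ∧ u ≠ a ∧ u ≠ b))
    (hPS : ∀ u ∈ P, u ∈ S)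
    (hPa : ∀ u ∈ P, G.Adj a u ∨ G.Adj b u)
    (hPab : ∀ u ∈ P, ¬ (G.Adj a u ∧ G.Adj b u))
    (hw : ∀ u ∈ P, G.neighborFinset u ∩ S = {wf u})
    (y₀ : Fin n) (hy₀S : y₀ ∈ S) (hy₀b : G.Adj b y₀) (hy₀a : ¬ G.Adj a y₀)
    (x : Fin n) (hxS : x ∈ S) (hxa : G.Adj a x) (hxb : ¬ G.Adj b x)
    (u₀ : Fin n) (hu₀ : u₀ ∈ P) (hwu₀ : wf u₀ = x) :
    (P.filter (fun u => wf u = x)).card + 2 ≤ (G.neighborFinset x ∩ S).card := by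
  have stepA : ∀ u ∈ P, wf u = x → G.Adj a u ∧ ¬ G.Adj b u := by
    intro u hu hwu
    have huS := (hS u).1 (hPS u hu)
    have hNuS := hw u hu
    rw [hwu] at hNuS
    have hnb : ¬ G.Adj b u := by
      intro hbu
      have hnau : ¬ G.Adj a u := fun hau => hPab u hu ⟨hau, hbu⟩
      obtain ⟨z, huz, hbz⟩ := htri u b hbu.symm
      have hzv : z ≠ v := by rintro rfl; have := (hNv u).1 huz.symm; tauto
      have hza : z ≠ a := by rintro rfl; exact hnau huz.symm
      have hzb : z ≠ b := by rintro rfl; exact G.loopless.irrefl z hbz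
      have hzS : z ∈ S := (hS z).2 ⟨hzv, hza, hzb⟩
      have hzx : z = x := by
        have hmem : z ∈ G.neighborFinset u ∩ S := by
          simp [SimpleGraph.mem_neighborFinset, huz, hzS]
        rw [hNuS] at hmem; simpa using hmem
      subst hzx; exact hxb hbz
    rcases hPa u hu with h | h
    · exact ⟨h, hnb⟩
    · exact absurd h hnb
  obtain ⟨hau₀, hnbu₀⟩ := stepA u₀ hu₀ hwu₀
  have hu₀S := hPS u₀ hu₀
  have hu₀S' := (hS u₀).1 hu₀S
  have hNu₀ := hw u₀ hu₀
  rw [hwu₀] at hNu₀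
  have hxy : G.Adj x y₀ := by
    have hney : u₀ ≠ y₀ := by rintro rfl; exact hnbu₀ hy₀b
    have hnadj : ¬ G.Adj u₀ y₀ := by
      intro h
      have hmem : y₀ ∈ G.neighborFinset u₀ ∩ S := by
        simp [SimpleGraph.mem_neighborFinset, h, hy₀S]
      rw [hNu₀] at hmem
      have : y₀ = x := by simpa using hmem
      subst this; exact hxb hy₀b
    obtain ⟨z, hu₀z, hzy⟩ := hcom u₀ y₀ hney hnadj
    have hzv : z ≠ v := by rintro rfl; have := (hNv u₀).1 hu₀z.symm; tauto
    have hza : z ≠ a := by rintro rfl; exact hy₀a hzy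
    have hzb : z ≠ b := by rintro rfl; exact hnbu₀ hu₀z.symm
    have hzS : z ∈ S := (hS z).2 ⟨hzv, hza, hzb⟩
    have hzx : z = x := by
      have hmem : z ∈ G.neighborFinset u₀ ∩ S := by
        simp [SimpleGraph.mem_neighborFinset, hu₀z, hzS]
      rw [hNu₀] at hmem; simpa using hmem
    subst hzx; exact hzy
  obtain ⟨z, hxz, hyz⟩ := htri x y₀ hxy
  have hxS' := (hS x).1 hxS
  have hzv : z ≠ v := by rintro rfl; have := (hNv x).1 hxz.symm; tauto
  have hza : z ≠ a := by rintro rfl; exact hy₀a hyz.symm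
  have hzb : z ≠ b := by rintro rfl; exact hxb hxz.symm
  have hzS : z ∈ S := (hS z).2 ⟨hzv, hza, hzb⟩
  have hzy₀ : z ≠ y₀ := by rintro rfl; exact G.loopless.irrefl z hyz
  set F := P.filter (fun u => wf u = x) with hF
  have hyF : y₀ ∉ F := by
    intro hy
    rw [hF, mem_filter] at hy
    exact (stepA y₀ hy.1 hy.2).2 hy₀b
  have hzF : z ∉ F := by
    intro hz
    rw [hF, mem_filter] at hz
    have hNz := hw z hz.1
    rw [hz.2] at hNz
    have hmem : y₀ ∈ G.neighborFinset z ∩ S := by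
      simp [SimpleGraph.mem_neighborFinset, hyz.symm, hy₀S]
    rw [hNz] at hmem
    have : y₀ = x := by simpa using hmem
    subst this; exact hxb hy₀b
  have hsub : F ∪ {y₀, z} ⊆ G.neighborFinset x ∩ S := by
    intro u hu
    rw [mem_union] at hu
    rcases hu with hu | hu
    · rw [hF, mem_filter] at hu
      have hx' : x ∈ G.neighborFinset u ∩ S := by
        rw [hw u hu.1, hu.2]; simp
      rw [mem_inter, SimpleGraph.mem_neighborFinset] at hx'
      rw [mem_inter, SimpleGraph.mem_neighborFinset]
      exact ⟨hx'.1.symm, hPS u hu.1⟩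
    · rw [mem_insert, mem_singleton] at hu
      rcases hu with rfl | rfl
      · rw [mem_inter, SimpleGraph.mem_neighborFinset]; exact ⟨hxy, hy₀S⟩
      · rw [mem_inter, SimpleGraph.mem_neighborFinset]; exact ⟨hxz, hzS⟩
  have hdisj : Disjoint F ({y₀, z} : Finset (Fin n)) := by
    rw [Finset.disjoint_right]
    intro u hu
    rw [mem_insert, mem_singleton] at hu
    rcases hu with rfl | rfl
    · exact hyF
    · exact hzF
  have hcard2 : ({y₀, z} : Finset (Fin n)).card = 2 := by
    rw [card_pair (Ne.symm hzy₀)]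
  calc F.card + 2 = (F ∪ {y₀, z}).card := by
        rw [card_union_of_disjoint hdisj, hcard2]
    _ ≤ (G.neighborFinset x ∩ S).card := card_le_card hsub


/-- In any graph `G` with `diam(G) = rad(G) = 2` and the triangle-property, if
some vertex has degree `2`, then `|E(G)| ≥ 2n - 3`. -/
theorem stmt13 (n : ℕ) (G : SimpleGraph (Fin n)) [DecidableRel G.Adj]
    (hconn : G.Connected)
    (hdiam : ∀ u v : Fin n, G.dist u v ≤ 2)
    (hrad : ∀ v : Fin n, ∃ u : Fin n, 2 ≤ G.dist v u)
    (htri : ∀ u v : Fin n, G.Adj u v → ∃ w : Fin n, G.Adj u w ∧ G.Adj v w)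
    (hdeg2 : ∃ v : Fin n, G.degree v = 2) :
    2 * n - 3 ≤ G.edgeFinset.card := by
  classical
  have hcom : ∀ x y : Fin n, x ≠ y → ¬G.Adj x y → ∃ z, G.Adj x z ∧ G.Adj z y :=
    fun x y => common_of_dist_le_two G hconn hdiam x y
  obtain ⟨v, hv⟩ := hdeg2
  have hcard : (G.neighborFinset v).card = 2 := hv
  obtain ⟨a, b, hab, hNvset⟩ := Finset.card_eq_two.mp hcard
  have hNv : ∀ u, G.Adj v u ↔ u = a ∨ u = b := by
    intro u; rw [← SimpleGraph.mem_neighborFinset, hNvset]; simp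
  have hva : G.Adj v a := (hNv a).2 (Or.inl rfl)
  have hvb : G.Adj v b := (hNv b).2 (Or.inr rfl)
  have hAB : G.Adj a b := by
    obtain ⟨w, hvw, haw⟩ := htri v a hva
    rcases (hNv w).1 hvw with rfl | rfl
    · exact absurd haw (G.loopless.irrefl _)
    · exact haw
  set S : Finset (Fin n) := Finset.univ \ {v, a, b} with hSdef
  have hS : ∀ u, u ∈ S ↔ (u ≠ v ∧ u ≠ a ∧ u ≠ b) := by
    intro u; simp [hSdef, not_or]
  have hcover : ∀ u ∈ S, G.Adj a u ∨ G.Adj b u := by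
    intro u huS
    rw [hS] at huS
    have hnv : ¬ G.Adj v u := by
      intro h; rcases (hNv u).1 h with rfl | rfl <;> tauto
    obtain ⟨z, hvz, hzu⟩ := hcom v u (Ne.symm huS.1) hnv
    rcases (hNv z).1 hvz with rfl | rfl
    · exact Or.inl hzu
    · exact Or.inr hzu
  set A := S.filter (fun u => G.Adj a u ∧ ¬ G.Adj b u) with hAdef
  set B := S.filter (fun u => G.Adj b u ∧ ¬ G.Adj a u) with hBdef
  set C := S.filter (fun u => G.Adj a u ∧ G.Adj b u) with hCdef
  have hBne : ∃ y, y ∈ S ∧ G.Adj b y ∧ ¬ G.Adj a y := by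
    obtain ⟨y, hy⟩ := hrad a
    obtain ⟨hya, hnay⟩ := not_adj_of_two_le_dist G hy
    have hyv : y ≠ v := by rintro rfl; exact hnay hva.symm
    have hyb : y ≠ b := by rintro rfl; exact hnay hAB
    have hyS : y ∈ S := (hS y).2 ⟨hyv, Ne.symm hya, hyb⟩
    rcases hcover y hyS with h | h
    · exact absurd h hnay
    · exact ⟨y, hyS, h, hnay⟩
  have hAne : ∃ x, x ∈ S ∧ G.Adj a x ∧ ¬ G.Adj b x := by
    obtain ⟨y, hy⟩ := hrad b
    obtain ⟨hya, hnay⟩ := not_adj_of_two_le_dist G hy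
    have hyv : y ≠ v := by rintro rfl; exact hnay hvb.symm
    have hyb : y ≠ a := by rintro rfl; exact hnay hAB.symm
    have hyS : y ∈ S := (hS y).2 ⟨hyv, hyb, Ne.symm hya⟩
    rcases hcover y hyS with h | h
    · exact ⟨y, hyS, h, hnay⟩
    · exact absurd h hnay
  obtain ⟨y₀, hy₀S, hy₀b, hy₀a⟩ := hBne
  obtain ⟨x₀, hx₀S, hx₀a, hx₀b⟩ := hAne
  have hABdisj : Disjoint A B := by
    rw [Finset.disjoint_left]
    intro u hu hu'
    rw [hAdef, Finset.mem_filter] at hu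
    rw [hBdef, Finset.mem_filter] at hu'
    exact hu.2.2 hu'.2.1
  -- core inequality
  set T := A ∪ B with hTdef
  set P := T.filter (fun u => (G.neighborFinset u ∩ S).card = 1) with hPdef
  have hex : ∀ u : Fin n, ∃ c, u ∈ P → G.neighborFinset u ∩ S = {c} := by
    intro u
    by_cases hu : u ∈ P
    · rw [hPdef, Finset.mem_filter] at hu
      obtain ⟨c, hc⟩ := Finset.card_eq_one.mp hu.2
      exact ⟨c, fun _ => hc⟩
    · exact ⟨u, fun h => absurd h hu⟩
  choose wf hw using hex
  set W := P.image wf with hWdef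
  have hTS : T ⊆ S := by
    rw [hTdef]
    exact Finset.union_subset (hAdef ▸ Finset.filter_subset _ _)
      (hBdef ▸ Finset.filter_subset _ _)
  have hPT : P ⊆ T := hPdef ▸ Finset.filter_subset _ _
  have hPS : ∀ u ∈ P, u ∈ S := fun u hu => hTS (hPT hu)
  have hPa : ∀ u ∈ P, G.Adj a u ∨ G.Adj b u := fun u hu => hcover u (hPS u hu)
  have hPab : ∀ u ∈ P, ¬ (G.Adj a u ∧ G.Adj b u) := by
    intro u hu h
    rcases Finset.mem_union.mp (hPT hu) with h' | h'
    · rw [hAdef, Finset.mem_filter] at h'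
      exact h'.2.2 h.2
    · rw [hBdef, Finset.mem_filter] at h'
      exact h'.2.2 h.1
  have hWS : ∀ x ∈ W, x ∈ S := by
    intro x hx
    obtain ⟨u, hu, rfl⟩ := Finset.mem_image.mp hx
    have hm : wf u ∈ G.neighborFinset u ∩ S := by rw [hw u hu]; simp
    exact (Finset.mem_inter.mp hm).2
  have hfib : ∀ x, (P.filter (fun u => wf u = x)).card ≤ (G.neighborFinset x ∩ S).card := by
    intro x
    apply Finset.card_le_card
    intro u hu
    rw [Finset.mem_filter] at hu
    have hx' : x ∈ G.neighborFinset u ∩ S := by rw [hw u hu.1, hu.2]; simp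
    rw [Finset.mem_inter, SimpleGraph.mem_neighborFinset] at hx'
    rw [Finset.mem_inter, SimpleGraph.mem_neighborFinset]
    exact ⟨hx'.1.symm, hPS u hu.1⟩
  have hNv' : ∀ u, G.Adj v u ↔ u = b ∨ u = a := fun u => (hNv u).trans or_comm
  have hS' : ∀ u, u ∈ S ↔ (u ≠ v ∧ u ≠ b ∧ u ≠ a) := by
    intro u; rw [hS]; tauto
  have hds1 : ∀ u ∈ T, 1 ≤ (G.neighborFinset u ∩ S).card := by
    intro u hu
    rcases Finset.mem_union.mp hu with h | h
    · rw [hAdef, Finset.mem_filter] at h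
      exact aux_one G htri v a b hNv S hS u h.1 h.2.1 h.2.2
    · rw [hBdef, Finset.mem_filter] at h
      exact aux_one G htri v b a hNv' S hS' u h.1 h.2.1 h.2.2
  have hPa' : ∀ u ∈ P, G.Adj b u ∨ G.Adj a u := fun u hu => (hPa u hu).symm
  have hPab' : ∀ u ∈ P, ¬ (G.Adj b u ∧ G.Adj a u) := fun u hu h => hPab u hu ⟨h.2, h.1⟩
  have hkey : ∀ x ∈ T ∩ W,
      (P.filter (fun u => wf u = x)).card + 2 ≤ (G.neighborFinset x ∩ S).card := by
    intro x hx
    rw [Finset.mem_inter] at hx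
    obtain ⟨u₀, hu₀, hwu₀⟩ := Finset.mem_image.mp hx.2
    rcases Finset.mem_union.mp hx.1 with h | h
    · rw [hAdef, Finset.mem_filter] at h
      exact aux_key G htri hcom v a b hNv S P wf hS hPS hPa hPab hw
        y₀ hy₀S hy₀b hy₀a x h.1 h.2.1 h.2.2 u₀ hu₀ hwu₀
    · rw [hBdef, Finset.mem_filter] at h
      exact aux_key G htri hcom v b a hNv' S P wf hS' hPS hPa' hPab' hw
        x₀ hx₀S hx₀a hx₀b x h.1 h.2.1 h.2.2 u₀ hu₀ hwu₀
  have hPW : P ⊆ T \ W := by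
    intro u hu
    rw [Finset.mem_sdiff]
    refine ⟨hPT hu, fun huW => ?_⟩
    have h1 := hkey u (Finset.mem_inter.mpr ⟨hPT hu, huW⟩)
    have h2 : (G.neighborFinset u ∩ S).card = 1 := by
      have := hu; rw [hPdef, Finset.mem_filter] at this; exact this.2
    omega
  have hcore : 2 * (A.card + B.card) ≤ ∑ u ∈ S, (G.neighborFinset u ∩ S).card := by
    have h1 : ∑ u ∈ T ∪ W, (G.neighborFinset u ∩ S).card
        ≤ ∑ u ∈ S, (G.neighborFinset u ∩ S).card := by
      apply Finset.sum_le_sum_of_subset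
      exact Finset.union_subset hTS (fun x hx => hWS x hx)
    have h2 : ∑ u ∈ T ∪ W, (G.neighborFinset u ∩ S).card
        = ∑ u ∈ T, (G.neighborFinset u ∩ S).card
          + ∑ u ∈ W \ T, (G.neighborFinset u ∩ S).card := by
      rw [← Finset.sum_union Finset.disjoint_sdiff, Finset.union_sdiff_self_eq_union]
    have h3 : ∑ x ∈ W \ T, (P.filter (fun u => wf u = x)).card
        ≤ ∑ x ∈ W \ T, (G.neighborFinset x ∩ S).card :=
      Finset.sum_le_sum (fun x _ => hfib x)
    have h4 : ∑ u ∈ T, (G.neighborFinset u ∩ S).card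
        = ∑ u ∈ T ∩ W, (G.neighborFinset u ∩ S).card
          + ∑ u ∈ T \ W, (G.neighborFinset u ∩ S).card :=
      (Finset.sum_inter_add_sum_sdiff T W _).symm
    have h5 : ∑ x ∈ T ∩ W, ((P.filter (fun u => wf u = x)).card + 2)
        ≤ ∑ x ∈ T ∩ W, (G.neighborFinset x ∩ S).card :=
      Finset.sum_le_sum (fun x hx => hkey x hx)
    have h5' : ∑ x ∈ T ∩ W, ((P.filter (fun u => wf u = x)).card + 2)
        = ∑ x ∈ T ∩ W, (P.filter (fun u => wf u = x)).card + 2 * (T ∩ W).card := by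
      rw [Finset.sum_add_distrib, Finset.sum_const, smul_eq_mul, mul_comm]
    have h7 : ∑ u ∈ (T \ W) \ P, (G.neighborFinset u ∩ S).card
          + ∑ u ∈ P, (G.neighborFinset u ∩ S).card
        = ∑ u ∈ T \ W, (G.neighborFinset u ∩ S).card :=
      Finset.sum_sdiff hPW
    have h8 : ∑ u ∈ P, (G.neighborFinset u ∩ S).card = P.card := by
      have hone : ∀ u ∈ P, (G.neighborFinset u ∩ S).card = 1 := by
        intro u hu
        rw [hPdef, Finset.mem_filter] at hu
        exact hu.2
      calc ∑ u ∈ P, (G.neighborFinset u ∩ S).card = ∑ _u ∈ P, 1 :=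
            Finset.sum_congr rfl hone
        _ = P.card := by simp
    have h9 : ∀ u ∈ (T \ W) \ P, 2 ≤ (G.neighborFinset u ∩ S).card := by
      intro u hu
      rw [Finset.mem_sdiff, Finset.mem_sdiff] at hu
      have h1' := hds1 u hu.1.1
      have h2' : ¬ ((G.neighborFinset u ∩ S).card = 1) := by
        intro hc
        exact hu.2 (by rw [hPdef, Finset.mem_filter]; exact ⟨hu.1.1, hc⟩)
      omega
    have h9' : 2 * ((T \ W) \ P).card
        ≤ ∑ u ∈ (T \ W) \ P, (G.neighborFinset u ∩ S).card := by
      calc 2 * ((T \ W) \ P).card = ((T \ W) \ P).card • 2 := by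
            rw [smul_eq_mul, mul_comm]
        _ ≤ _ := Finset.card_nsmul_le_sum _ _ _ h9
    have h10 : P.card = ∑ x ∈ W, (P.filter (fun u => wf u = x)).card :=
      Finset.card_eq_sum_card_fiberwise (fun u hu => Finset.mem_image_of_mem wf hu)
    have h11 : ∑ x ∈ W, (P.filter (fun u => wf u = x)).card
        = ∑ x ∈ W ∩ T, (P.filter (fun u => wf u = x)).card
          + ∑ x ∈ W \ T, (P.filter (fun u => wf u = x)).card :=
      (Finset.sum_inter_add_sum_sdiff W T _).symm
    rw [Finset.inter_comm W T] at h11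
    have hc1 : (T ∩ W).card + (T \ W).card = T.card :=
      Finset.card_inter_add_card_sdiff T W
    have hc2 : ((T \ W) \ P).card + P.card = (T \ W).card :=
      Finset.card_sdiff_add_card_eq_card hPW
    have hcT : T.card = A.card + B.card := by
      rw [hTdef, Finset.card_union_of_disjoint hABdisj]
    omega
  -- partition of S and cardinalities
  have hACdisj : Disjoint A C := by
    rw [Finset.disjoint_left]
    intro u hu hu'
    rw [hAdef, Finset.mem_filter] at hu
    rw [hCdef, Finset.mem_filter] at hu'
    exact hu.2.2 hu'.2.2
  have hBCdisj : Disjoint B C := by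
    rw [Finset.disjoint_left]
    intro u hu hu'
    rw [hBdef, Finset.mem_filter] at hu
    rw [hCdef, Finset.mem_filter] at hu'
    exact hu.2.2 hu'.2.1
  have hTCdisj : Disjoint T C := by
    rw [hTdef]; exact Finset.disjoint_union_left.mpr ⟨hACdisj, hBCdisj⟩
  have hSpart : T ∪ C = S := by
    ext u
    rw [hTdef]
    simp only [Finset.mem_union, hAdef, hBdef, hCdef, Finset.mem_filter]
    constructor
    · rintro ((h | h) | h) <;> exact h.1
    · intro huS
      by_cases ha : G.Adj a u <;> by_cases hb : G.Adj b u
      · exact Or.inr ⟨huS, ha, hb⟩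
      · exact Or.inl (Or.inl ⟨huS, ha, hb⟩)
      · exact Or.inl (Or.inr ⟨huS, hb, ha⟩)
      · rcases hcover u huS with h | h
        · exact absurd h ha
        · exact absurd h hb
  have hScard : A.card + B.card + C.card = S.card := by
    rw [← hSpart, Finset.card_union_of_disjoint hTCdisj, hTdef,
      Finset.card_union_of_disjoint hABdisj]
  have hvab3 : ({v, a, b} : Finset (Fin n)).card = 3 := by
    rw [Finset.card_insert_of_notMem (by simp [hva.ne, hvb.ne]),
      Finset.card_insert_of_notMem (by simp [hab]), Finset.card_singleton]
  have huniv : (Finset.univ : Finset (Fin n)).card = n := by simp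
  have h3n : 3 ≤ n := by
    have h := Finset.card_le_card (Finset.subset_univ ({v, a, b} : Finset (Fin n)))
    rw [hvab3, huniv] at h; exact h
  have hScard' : S.card = n - 3 := by
    rw [hSdef, Finset.card_sdiff_of_subset (Finset.subset_univ _), hvab3, huniv]
  -- degree bounds
  have hdeg_lower : ∀ (u : Fin n) (D : Finset (Fin n)), D ⊆ G.neighborFinset u →
      Disjoint D S → D.card + (G.neighborFinset u ∩ S).card ≤ G.degree u := by
    intro u D hD hdisj
    have hsub : D ∪ (G.neighborFinset u ∩ S) ⊆ G.neighborFinset u :=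
      Finset.union_subset hD Finset.inter_subset_left
    have hdisj2 : Disjoint D (G.neighborFinset u ∩ S) :=
      hdisj.mono_right Finset.inter_subset_right
    calc D.card + (G.neighborFinset u ∩ S).card
        = (D ∪ (G.neighborFinset u ∩ S)).card :=
          (Finset.card_union_of_disjoint hdisj2).symm
      _ ≤ (G.neighborFinset u).card := Finset.card_le_card hsub
      _ = G.degree u := G.card_neighborFinset_eq_degree u
  have haS : a ∉ S := by simp [hS]
  have hbS : b ∉ S := by simp [hS]
  have hdegA : ∀ u ∈ A, 1 + (G.neighborFinset u ∩ S).card ≤ G.degree u := by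
    intro u hu
    rw [hAdef, Finset.mem_filter] at hu
    have := hdeg_lower u {a} (by simp [SimpleGraph.mem_neighborFinset]; exact hu.2.1.symm)
      (by simp [haS])
    simpa using this
  have hdegB : ∀ u ∈ B, 1 + (G.neighborFinset u ∩ S).card ≤ G.degree u := by
    intro u hu
    rw [hBdef, Finset.mem_filter] at hu
    have := hdeg_lower u {b} (by simp [SimpleGraph.mem_neighborFinset]; exact hu.2.1.symm)
      (by simp [hbS])
    simpa using this
  have hdegC : ∀ u ∈ C, 2 + (G.neighborFinset u ∩ S).card ≤ G.degree u := by
    intro u hu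
    rw [hCdef, Finset.mem_filter] at hu
    have hsub : ({a, b} : Finset (Fin n)) ⊆ G.neighborFinset u := by
      intro z hz
      rw [Finset.mem_insert, Finset.mem_singleton] at hz
      rcases hz with rfl | rfl
      · rw [SimpleGraph.mem_neighborFinset]; exact hu.2.1.symm
      · rw [SimpleGraph.mem_neighborFinset]; exact hu.2.2.symm
    have := hdeg_lower u {a, b} hsub (by simp [haS, hbS])
    rwa [Finset.card_pair hab] at this
  have hdega : 2 + (A.card + C.card) ≤ G.degree a := by
    have hvm : v ∉ insert b (A ∪ C) := by
      simp only [Finset.mem_insert, Finset.mem_union]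
      push_neg
      refine ⟨hvb.ne, fun h => ?_, fun h => ?_⟩
      · have := hTS (Finset.mem_union_left B h); simp [hS] at this
      · have : v ∈ S := (hCdef ▸ Finset.filter_subset _ S) h; simp [hS] at this
    have hbm : b ∉ A ∪ C := by
      intro h
      rcases Finset.mem_union.mp h with h | h
      · have := hTS (Finset.mem_union_left B h); simp [hS] at this
      · have : b ∈ S := (hCdef ▸ Finset.filter_subset _ S) h; simp [hS] at this
    have hsub : insert v (insert b (A ∪ C)) ⊆ G.neighborFinset a := by
      intro z hz
      rw [SimpleGraph.mem_neighborFinset]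
      rcases Finset.mem_insert.mp hz with rfl | hz
      · exact hva.symm
      rcases Finset.mem_insert.mp hz with rfl | hz
      · exact hAB
      rcases Finset.mem_union.mp hz with h | h
      · rw [hAdef, Finset.mem_filter] at h; exact h.2.1
      · rw [hCdef, Finset.mem_filter] at h; exact h.2.1
    calc 2 + (A.card + C.card) = (insert v (insert b (A ∪ C))).card := by
          rw [Finset.card_insert_of_notMem hvm, Finset.card_insert_of_notMem hbm,
            Finset.card_union_of_disjoint hACdisj]
          omega
      _ ≤ (G.neighborFinset a).card := Finset.card_le_card hsub
      _ = G.degree a := G.card_neighborFinset_eq_degree a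
  have hdegb : 2 + (B.card + C.card) ≤ G.degree b := by
    have hvm : v ∉ insert a (B ∪ C) := by
      simp only [Finset.mem_insert, Finset.mem_union]
      push_neg
      refine ⟨hva.ne, fun h => ?_, fun h => ?_⟩
      · have := hTS (Finset.mem_union_right A h); simp [hS] at this
      · have : v ∈ S := (hCdef ▸ Finset.filter_subset _ S) h; simp [hS] at this
    have ham : a ∉ B ∪ C := by
      intro h
      rcases Finset.mem_union.mp h with h | h
      · have := hTS (Finset.mem_union_right A h); simp [hS] at this
      · have : a ∈ S := (hCdef ▸ Finset.filter_subset _ S) h; simp [hS] at this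
    have hsub : insert v (insert a (B ∪ C)) ⊆ G.neighborFinset b := by
      intro z hz
      rw [SimpleGraph.mem_neighborFinset]
      rcases Finset.mem_insert.mp hz with rfl | hz
      · exact hvb.symm
      rcases Finset.mem_insert.mp hz with rfl | hz
      · exact hAB.symm
      rcases Finset.mem_union.mp hz with h | h
      · rw [hBdef, Finset.mem_filter] at h; exact h.2.1
      · rw [hCdef, Finset.mem_filter] at h; exact h.2.2
    calc 2 + (B.card + C.card) = (insert v (insert a (B ∪ C))).card := by
          rw [Finset.card_insert_of_notMem hvm, Finset.card_insert_of_notMem ham,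
            Finset.card_union_of_disjoint hBCdisj]
          omega
      _ ≤ (G.neighborFinset b).card := Finset.card_le_card hsub
      _ = G.degree b := G.card_neighborFinset_eq_degree b
  -- sum splits
  have hsplit : ∑ u ∈ S, G.degree u + ∑ u ∈ ({v, a, b} : Finset (Fin n)), G.degree u
      = ∑ u : Fin n, G.degree u := by
    rw [hSdef]; exact Finset.sum_sdiff (Finset.subset_univ _)
  have hsum3 : ∑ u ∈ ({v, a, b} : Finset (Fin n)), G.degree u
      = G.degree v + (G.degree a + G.degree b) := by
    rw [Finset.sum_insert (by simp [hva.ne, hvb.ne]),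
      Finset.sum_insert (by simp [hab]), Finset.sum_singleton]
  have hsumSdeg : ∑ u ∈ S, G.degree u
      = ∑ u ∈ A, G.degree u + ∑ u ∈ B, G.degree u + ∑ u ∈ C, G.degree u := by
    rw [← hSpart, Finset.sum_union hTCdisj, hTdef, Finset.sum_union hABdisj]
  have hsumSf : ∑ u ∈ S, (G.neighborFinset u ∩ S).card
      = ∑ u ∈ A, (G.neighborFinset u ∩ S).card + ∑ u ∈ B, (G.neighborFinset u ∩ S).card
        + ∑ u ∈ C, (G.neighborFinset u ∩ S).card := by
    rw [← hSpart, Finset.sum_union hTCdisj, hTdef, Finset.sum_union hABdisj]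
  have hsumA : A.card + ∑ u ∈ A, (G.neighborFinset u ∩ S).card ≤ ∑ u ∈ A, G.degree u := by
    calc A.card + ∑ u ∈ A, (G.neighborFinset u ∩ S).card
        = ∑ u ∈ A, (1 + (G.neighborFinset u ∩ S).card) := by
          rw [Finset.sum_add_distrib, Finset.sum_const, smul_eq_mul, mul_one]
      _ ≤ ∑ u ∈ A, G.degree u := Finset.sum_le_sum hdegA
  have hsumB : B.card + ∑ u ∈ B, (G.neighborFinset u ∩ S).card ≤ ∑ u ∈ B, G.degree u := by
    calc B.card + ∑ u ∈ B, (G.neighborFinset u ∩ S).card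
        = ∑ u ∈ B, (1 + (G.neighborFinset u ∩ S).card) := by
          rw [Finset.sum_add_distrib, Finset.sum_const, smul_eq_mul, mul_one]
      _ ≤ ∑ u ∈ B, G.degree u := Finset.sum_le_sum hdegB
  have hsumC : 2 * C.card + ∑ u ∈ C, (G.neighborFinset u ∩ S).card
      ≤ ∑ u ∈ C, G.degree u := by
    calc 2 * C.card + ∑ u ∈ C, (G.neighborFinset u ∩ S).card
        = ∑ u ∈ C, (2 + (G.neighborFinset u ∩ S).card) := by
          rw [Finset.sum_add_distrib, Finset.sum_const, smul_eq_mul, mul_comm]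
      _ ≤ ∑ u ∈ C, G.degree u := Finset.sum_le_sum hdegC
  have hdeqsum : ∑ u : Fin n, G.degree u = 2 * G.edgeFinset.card :=
    SimpleGraph.sum_degrees_eq_twice_card_edges G
  omega
end

section
/- Let G be a graph on n vertices such that every edge of G lies in a triangle and G is connected. Then |E(G)| ≥ (3/2)(n−1). -/
open Finset

namespace Stmt14

variable {n : ℕ} (G : SimpleGraph (Fin n)) [DecidableRel G.Adj]

def D (S : Finset (Fin n)) : Finset (Fin n × Fin n) :=
  (S ×ˢ S).filter fun p => G.Adj p.1 p.2

lemma D_univ_card : (D G univ).card = 2 * G.edgeFinset.card := by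
  rw [SimpleGraph.two_mul_card_edgeFinset]
  congr 1

lemma step (hconn : G.Connected)
    (htri : ∀ u v : Fin n, G.Adj u v → ∃ w : Fin n, G.Adj u w ∧ G.Adj v w)
    (S : Finset (Fin n)) (hS : S.Nonempty) (hne : S ≠ univ)
    (hinv : 3 * S.card ≤ (D G S).card + 3) :
    ∃ S', S.card < S'.card ∧ 3 * S'.card ≤ (D G S').card + 3 := by
  obtain ⟨u, hu⟩ := hS
  have hvex : ∃ v, v ∉ S := by
    by_contra h
    push_neg at h
    exact hne (Finset.eq_univ_iff_forall.mpr h)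
  obtain ⟨v, hv⟩ := hvex
  obtain ⟨p⟩ := hconn.preconnected u v
  obtain ⟨d, -, haS, hbS⟩ := p.exists_boundary_dart (↑S : Set (Fin n)) hu hv
  set a := d.fst with ha
  set b := d.snd with hb
  have hab : G.Adj a b := d.adj
  have haS : a ∈ S := haS
  have hbS : b ∉ S := hbS
  obtain ⟨w, haw, hbw⟩ := htri a b hab
  have hanb : a ≠ b := hab.ne
  have hanw : a ≠ w := haw.ne
  have hbnw : b ≠ w := hbw.ne
  by_cases hwS : w ∈ S
  · -- add vertex b; new pairs (a,b),(b,a),(w,b),(b,w)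
    refine ⟨insert b S, by simp [Finset.card_insert_of_notMem hbS], ?_⟩
    set T : Finset (Fin n × Fin n) := {(a,b),(b,a),(w,b),(b,w)} with hT
    have hTcard : T.card = 4 := by
      rw [hT]
      rw [Finset.card_insert_of_notMem (by
          simp [Prod.ext_iff, hanb, hanw, hbnw, Ne.symm hanb, Ne.symm hanw, Ne.symm hbnw]),
        Finset.card_insert_of_notMem (by
          simp [Prod.ext_iff, hanb, hanw, hbnw, Ne.symm hanb, Ne.symm hanw, Ne.symm hbnw]),
        Finset.card_insert_of_notMem (by
          simp [Prod.ext_iff, hanb, hanw, hbnw, Ne.symm hanb, Ne.symm hanw, Ne.symm hbnw]),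
        Finset.card_singleton]
    have hdisj : Disjoint (D G S) T := by
      rw [Finset.disjoint_right]
      intro x hx hxD
      simp only [hT, Finset.mem_insert, Finset.mem_singleton] at hx
      simp only [D, Finset.mem_filter, Finset.mem_product] at hxD
      rcases hx with h | h | h | h <;> subst h <;> exact hbS (by tauto)
    have hsub : D G S ∪ T ⊆ D G (insert b S) := by
      intro x hx
      simp only [D, Finset.mem_filter, Finset.mem_product, Finset.mem_insert]
      rcases Finset.mem_union.mp hx with h | h
      · simp only [D, Finset.mem_filter, Finset.mem_product] at h
        exact ⟨⟨Or.inr h.1.1, Or.inr h.1.2⟩, h.2⟩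
      · simp only [hT, Finset.mem_insert, Finset.mem_singleton] at h
        rcases h with h | h | h | h <;> subst h <;>
          exact ⟨⟨by tauto, by tauto⟩, by
            first | exact hab | exact hab.symm | exact hbw | exact hbw.symm⟩
    have := Finset.card_le_card hsub
    rw [Finset.card_union_of_disjoint hdisj, hTcard] at this
    rw [Finset.card_insert_of_notMem hbS]
    omega
  · -- add vertices b and w; new pairs: offDiag {a,b,w}
    refine ⟨insert b (insert w S), ?_, ?_⟩
    · rw [Finset.card_insert_of_notMem (by simp [hbS, hbnw]),
        Finset.card_insert_of_notMem hwS]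
      omega
    set T : Finset (Fin n × Fin n) := ({a,b,w} : Finset (Fin n)).offDiag with hT
    have h3 : ({a,b,w} : Finset (Fin n)).card = 3 := by
      rw [Finset.card_insert_of_notMem (by simp [hanb, hanw]),
        Finset.card_insert_of_notMem (by simp [hbnw]), Finset.card_singleton]
    have hTcard : T.card = 6 := by
      rw [hT, Finset.offDiag_card, h3]
    have hdisj : Disjoint (D G S) T := by
      rw [Finset.disjoint_right]
      rintro ⟨x1, x2⟩ hx hxD
      simp only [hT, Finset.mem_offDiag, Finset.mem_insert, Finset.mem_singleton] at hx
      simp only [D, Finset.mem_filter, Finset.mem_product] at hxD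
      obtain ⟨h1, h2, h12⟩ := hx
      dsimp at h1 h2 h12
      rcases h1 with rfl | rfl | rfl <;> rcases h2 with rfl | rfl | rfl <;>
        first
        | exact h12 rfl
        | exact hbS hxD.1.1
        | exact hbS hxD.1.2
        | exact hwS hxD.1.1
        | exact hwS hxD.1.2
    have hsub : D G S ∪ T ⊆ D G (insert b (insert w S)) := by
      rintro ⟨x1, x2⟩ hx
      simp only [D, Finset.mem_filter, Finset.mem_product, Finset.mem_insert]
      rcases Finset.mem_union.mp hx with h | h
      · simp only [D, Finset.mem_filter, Finset.mem_product] at h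
        exact ⟨⟨Or.inr (Or.inr h.1.1), Or.inr (Or.inr h.1.2)⟩, h.2⟩
      · simp only [hT, Finset.mem_offDiag, Finset.mem_insert, Finset.mem_singleton] at h
        obtain ⟨h1, h2, h12⟩ := h
        dsimp at h1 h2 h12 ⊢
        rcases h1 with rfl | rfl | rfl <;> rcases h2 with rfl | rfl | rfl <;>
          first
          | exact absurd rfl h12
          | exact ⟨⟨by tauto, by tauto⟩, by
              first | exact hab | exact hab.symm | exact haw | exact haw.symm
                    | exact hbw | exact hbw.symm⟩
    have := Finset.card_le_card hsub
    rw [Finset.card_union_of_disjoint hdisj, hTcard] at this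
    rw [Finset.card_insert_of_notMem (by simp [hbS, hbnw]),
      Finset.card_insert_of_notMem hwS]
    omega

lemma grow (hconn : G.Connected)
    (htri : ∀ u v : Fin n, G.Adj u v → ∃ w : Fin n, G.Adj u w ∧ G.Adj v w) :
    ∀ k (S : Finset (Fin n)), n ≤ S.card + k → S.Nonempty →
      3 * S.card ≤ (D G S).card + 3 → 3 * n ≤ (D G univ).card + 3 := by
  intro k
  induction k with
  | zero =>
    intro S hcard hS hinv
    have : S = univ := Finset.eq_univ_of_card S (le_antisymm (Finset.card_le_univ S |>.trans (by simp)) (by simpa using hcard))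
    subst this
    simpa using hinv
  | succ k ih =>
    intro S hcard hS hinv
    by_cases hne : S = univ
    · subst hne; simpa using hinv
    · obtain ⟨S', hlt, hinv'⟩ := step G hconn htri S hS hne hinv
      exact ih S' (by omega) (Finset.card_pos.mp (by omega)) hinv'

end Stmt14

/-- A connected graph on `n` vertices in which every edge lies in a triangle has
at least `(3/2)(n-1)` edges. -/
theorem stmt14 (n : ℕ) (G : SimpleGraph (Fin n)) [DecidableRel G.Adj]
    (hconn : G.Connected)
    (htri : ∀ u v : Fin n, G.Adj u v → ∃ w : Fin n, G.Adj u w ∧ G.Adj v w) :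
    3 * (n - 1) ≤ 2 * G.edgeFinset.card := by
  rcases Nat.eq_zero_or_pos n with h0 | hpos
  · subst h0; simp
  · have hu : (⟨0, hpos⟩ : Fin n) = ⟨0, hpos⟩ := rfl
    have key := Stmt14.grow G hconn htri n ({⟨0, hpos⟩} : Finset (Fin n))
      (by simp) (by simp) (by simp [Stmt14.D])
    rw [Stmt14.D_univ_card] at key
    omega
end

section
/- Let n = qk with k ≥ 3, and let F ⊆ C([n],k) be non-trivial and union-q-efficient. Define the graph G on vertex set [n] where i and j are adjacent iff no set of F contains both i and j. Then the minimum degree of G is at least q−1, the maximum degree is at most (q−1)k, and for every two vertices u, v the common neighborhood contains a clique on q−2 vertices. -/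
open Finset

private lemma claim15 {q k n : ℕ} (hk : 1 ≤ k) (hn : n = q * k)
    {F : Finset (Finset (Fin n))} (hF : ∀ A ∈ F, A.card = k)
    (hnontriv : F.sup id = Finset.univ)
    (heff : ∀ F' ⊆ F, F'.sup id = Finset.univ →
      ∃ G ⊆ F', G.card = q ∧ G.sup id = Finset.univ)
    (T : Finset (Fin n)) (hT : T.card < q) :
    ∃ w : Fin n, w ∉ T ∧ ∀ t ∈ T, ∀ A ∈ F, ¬(w ∈ A ∧ t ∈ A) := by
  classical
  by_contra hcon
  push_neg at hcon
  set F' := F.filter (fun A => ∃ t ∈ T, t ∈ A) with hF'def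
  have hcov : F'.sup id = Finset.univ := by
    apply Finset.eq_univ_of_forall
    intro x
    rw [Finset.mem_sup]
    by_cases hx : x ∈ T
    · have hxu : x ∈ F.sup id := hnontriv ▸ Finset.mem_univ x
      rw [Finset.mem_sup] at hxu
      obtain ⟨A, hA, hxA⟩ := hxu
      exact ⟨A, Finset.mem_filter.2 ⟨hA, ⟨x, hx, hxA⟩⟩, hxA⟩
    · obtain ⟨t, ht, A, hA, hxA, htA⟩ := hcon x hx
      exact ⟨A, Finset.mem_filter.2 ⟨hA, ⟨t, ht, htA⟩⟩, hxA⟩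
  obtain ⟨G, hGF', hGcard, hGsup⟩ := heff F' (Finset.filter_subset _ _) hcov
  have key : ∀ A ∈ G, (A \ T).card ≤ k - 1 := by
    intro A hA
    obtain ⟨hAF, t, htT, htA⟩ := Finset.mem_filter.1 (hGF' hA)
    have hsub : A \ T ⊆ A.erase t := by
      intro x hx
      rw [Finset.mem_sdiff] at hx
      exact Finset.mem_erase.2 ⟨fun h => hx.2 (h ▸ htT), hx.1⟩
    calc (A \ T).card ≤ (A.erase t).card := Finset.card_le_card hsub
      _ = A.card - 1 := Finset.card_erase_of_mem htA
      _ = k - 1 := by rw [hF A hAF]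
  have hsub : (Finset.univ : Finset (Fin n)) ⊆ G.biUnion (fun A => A \ T) ∪ T := by
    intro x _
    have hxu : x ∈ G.sup id := hGsup ▸ Finset.mem_univ x
    rw [Finset.mem_sup] at hxu
    obtain ⟨A, hA, hxA⟩ := hxu
    by_cases hx : x ∈ T
    · exact Finset.mem_union_right _ hx
    · exact Finset.mem_union_left _ (Finset.mem_biUnion.2 ⟨A, hA, Finset.mem_sdiff.2 ⟨hxA, hx⟩⟩)
  have h1 : n ≤ q * (k - 1) + T.card := by
    calc n = (Finset.univ : Finset (Fin n)).card := by simp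
      _ ≤ (G.biUnion (fun A => A \ T) ∪ T).card := Finset.card_le_card hsub
      _ ≤ (G.biUnion (fun A => A \ T)).card + T.card := Finset.card_union_le _ _
      _ ≤ (∑ A ∈ G, (A \ T).card) + T.card := by
          exact Nat.add_le_add_right (Finset.card_biUnion_le) _
      _ ≤ (∑ _A ∈ G, (k - 1)) + T.card := by
          exact Nat.add_le_add_right (Finset.sum_le_sum key) _
      _ = q * (k - 1) + T.card := by rw [Finset.sum_const, hGcard, smul_eq_mul]
  have h2 : q * (k - 1) + q = q * k := by
    have : k - 1 + 1 = k := by omega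
    calc q * (k - 1) + q = q * (k - 1 + 1) := by ring
      _ = q * k := by rw [this]
  linarith

private lemma extend15 {q k n : ℕ} (hk : 1 ≤ k) (hn : n = q * k)
    {F : Finset (Finset (Fin n))} (hF : ∀ A ∈ F, A.card = k)
    (hnontriv : F.sup id = Finset.univ)
    (heff : ∀ F' ⊆ F, F'.sup id = Finset.univ →
      ∃ G ⊆ F', G.card = q ∧ G.sup id = Finset.univ) :
    ∀ m : ℕ, ∀ T : Finset (Fin n), T.card + m ≤ q →
    ∃ S : Finset (Fin n), S.card = m ∧ (∀ w ∈ S, w ∉ T) ∧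
      (∀ w ∈ S, ∀ t ∈ T, ∀ A ∈ F, ¬(w ∈ A ∧ t ∈ A)) ∧
      (∀ w ∈ S, ∀ w' ∈ S, w ≠ w' → ∀ A ∈ F, ¬(w ∈ A ∧ w' ∈ A)) := by
  intro m
  induction m with
  | zero => intro T _; exact ⟨∅, by simp⟩
  | succ m ih =>
    intro T hT
    obtain ⟨w, hwT, hwadj⟩ := claim15 hk hn hF hnontriv heff T (by omega)
    have hcard : (insert w T).card = T.card + 1 := Finset.card_insert_of_notMem hwT
    obtain ⟨S, hScard, hSnotin, hSadj, hSpair⟩ := ih (insert w T) (by omega)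
    have hwS : w ∉ S := fun h => hSnotin w h (Finset.mem_insert_self w T)
    refine ⟨insert w S, ?_, ?_, ?_, ?_⟩
    · rw [Finset.card_insert_of_notMem hwS, hScard]
    · intro x hx
      rcases Finset.mem_insert.1 hx with h | h
      · exact h ▸ hwT
      · exact fun hxT => hSnotin x h (Finset.mem_insert_of_mem hxT)
    · intro x hx t ht A hA
      rcases Finset.mem_insert.1 hx with h | h
      · exact h ▸ hwadj t ht A hA
      · exact hSadj x h t (Finset.mem_insert_of_mem ht) A hA
    · intro x hx y hy hxy A hA
      rcases Finset.mem_insert.1 hx with h | h <;> rcases Finset.mem_insert.1 hy with h' | h'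
      · exact absurd (h.trans h'.symm) hxy
      · subst h
        have := hSadj y h' x (Finset.mem_insert_self _ _) A hA
        tauto
      · subst h'
        exact hSadj x h y (Finset.mem_insert_self _ _) A hA
      · exact hSpair x h y h' hxy A hA

/-- Let `n = qk`, `k ≥ 3`, and `F ⊆ C([n],k)` non-trivial union-`q`-efficient.
Let `G` be the graph on `[n]` where `i ~ j` iff no member of `F` contains both
`i` and `j` (the complement of the 2-shadow of `F`). Then `δ(G) ≥ q-1`,
`Δ(G) ≤ (q-1)k`, and the common neighborhood of any two vertices contains a
clique on `q-2` vertices. -/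
theorem stmt15 (q k n : ℕ) (hk : 3 ≤ k) (hn : n = q * k)
    (F : Finset (Finset (Fin n))) (hF : ∀ A ∈ F, A.card = k)
    (hnontriv : F.sup id = Finset.univ)
    (heff : ∀ F' ⊆ F, F'.sup id = Finset.univ →
      ∃ G ⊆ F', G.card = q ∧ G.sup id = Finset.univ)
    (Adj : Fin n → Fin n → Prop)
    (hAdj : ∀ i j, Adj i j ↔ i ≠ j ∧ ∀ A ∈ F, ¬ (i ∈ A ∧ j ∈ A)) :
    (∀ v : Fin n, q - 1 ≤ {u : Fin n | Adj v u}.ncard) ∧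
    (∀ v : Fin n, {u : Fin n | Adj v u}.ncard ≤ (q - 1) * k) ∧
    (∀ u v : Fin n, u ≠ v →
      ∃ S : Finset (Fin n), S.card = q - 2 ∧
        (∀ w ∈ S, Adj u w ∧ Adj v w) ∧
        (∀ w ∈ S, ∀ w' ∈ S, w ≠ w' → Adj w w')) := by
  classical
  have hk1 : 1 ≤ k := by omega
  refine ⟨?_, ?_, ?_⟩
  · -- min degree
    intro v
    rcases Nat.eq_zero_or_pos q with hq | hq
    · simp [hq]
    · obtain ⟨S, hScard, hSnotin, hSadj, _⟩ :=
        extend15 hk1 hn hF hnontriv heff (q - 1) {v} (by simp; omega)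
      have hsub : (↑S : Set (Fin n)) ⊆ {u : Fin n | Adj v u} := by
        intro w hw
        rw [Finset.mem_coe] at hw
        have hne : v ≠ w := fun h => hSnotin w hw (by simp [h])
        refine (hAdj v w).2 ⟨hne, fun A hA ⟨hvA, hwA⟩ =>
          hSadj w hw v (Finset.mem_singleton_self v) A hA ⟨hwA, hvA⟩⟩
      calc q - 1 = S.card := hScard.symm
        _ = (↑S : Set (Fin n)).ncard := (Set.ncard_coe_finset S).symm
        _ ≤ _ := Set.ncard_le_ncard hsub (Set.toFinite _)
  · -- max degree
    intro v
    have hv : v ∈ F.sup id := hnontriv ▸ Finset.mem_univ v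
    rw [Finset.mem_sup] at hv
    obtain ⟨A, hAF, hvA⟩ := hv
    have hsub : {u : Fin n | Adj v u} ⊆ ↑(Aᶜ) := by
      intro u hu
      rw [Set.mem_setOf_eq, hAdj] at hu
      simp only [Finset.coe_compl, Set.mem_compl_iff, Finset.mem_coe]
      exact fun huA => hu.2 A hAF ⟨hvA, huA⟩
    have h1 : {u : Fin n | Adj v u}.ncard ≤ (Aᶜ : Finset (Fin n)).card := by
      rw [← Set.ncard_coe_finset]
      exact Set.ncard_le_ncard hsub (Set.toFinite _)
    have h2 : (Aᶜ : Finset (Fin n)).card = n - k := by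
      rw [Finset.card_compl, hF A hAF]; simp
    have h3 : (q - 1) * k = q * k - k := Nat.sub_one_mul q k
    have h4 : n = q * k := hn
    have hqk : k ≤ q * k ∨ q = 0 := by
      rcases Nat.eq_zero_or_pos q with h | h
      · exact Or.inr h
      · exact Or.inl (Nat.le_mul_of_pos_left k h)
    rcases hqk with h | h
    · omega
    · subst h
      simp at h4
      omega
  · -- cliques
    intro u v huv
    rcases Nat.lt_or_ge q 2 with hq | hq
    · refine ⟨∅, by simp; omega, by simp, by simp⟩
    · have hTcard : ({u, v} : Finset (Fin n)).card = 2 := by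
        rw [Finset.card_insert_of_notMem (by simp [huv]), Finset.card_singleton]
      obtain ⟨S, hScard, hSnotin, hSadj, hSpair⟩ :=
        extend15 hk1 hn hF hnontriv heff (q - 2) {u, v} (by omega)
      refine ⟨S, hScard, ?_, ?_⟩
      · intro w hw
        have hu' : u ≠ w := fun h => hSnotin w hw (by simp [h])
        have hv' : v ≠ w := fun h => hSnotin w hw (by simp [h])
        constructor
        · exact (hAdj u w).2 ⟨hu', fun A hA ⟨huA, hwA⟩ =>
            hSadj w hw u (by simp) A hA ⟨hwA, huA⟩⟩
        · exact (hAdj v w).2 ⟨hv', fun A hA ⟨hvA, hwA⟩ =>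
            hSadj w hw v (by simp) A hA ⟨hwA, hvA⟩⟩
      · intro w hw w' hw' hne
        exact (hAdj w w').2 ⟨hne, hSpair w hw w' hw' hne⟩
end

section
/- For n = 2q ≥ 10, the family F of complements of the edge set of the graph K_{n−4} with four pendant vertices attached to a single vertex of K_{n−4} — equivalently, the family F ⊆ C([n], n−2) of complements of its edges — contains no q-simplex and has size C(n−4,2) + 4 > C(q+1,2). -/
/-- For `n = 2q ≥ 10`: let `G` be the graph `K_{n-4}` (on the vertices of value
`< n-4`) with four extra vertices all attached to the vertex `0` of the clique,
let `E` be its edge set (as 2-element subsets of `[n]`) and `F` the family of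
complements of the edges. Then `F` contains no `q`-simplex and has size
`C(n-4,2) + 4 > C(q+1,2)`. -/
theorem stmt17 (q n : ℕ) (hq : 5 ≤ q) (hn : n = 2 * q)
    (E : Finset (Finset (Fin n)))
    (hE : E = Finset.univ.filter (fun A : Finset (Fin n) =>
      ∃ i j : Fin n, i ≠ j ∧
        ((i.val < n - 4 ∧ j.val < n - 4) ∨
         (i.val = 0 ∧ n - 4 ≤ j.val) ∨
         (j.val = 0 ∧ n - 4 ≤ i.val)) ∧
        A = {i, j}))
    (F : Finset (Finset (Fin n))) (hF : F = E.image (fun A => Aᶜ)) :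
    (¬ ∃ S ⊆ F, S.card = q + 1 ∧ S.inf id = ∅ ∧
        ∀ T ⊆ S, T.card = q → (T.inf id).Nonempty) ∧
    F.card = (n - 4).choose 2 + 4 ∧
    (q + 1).choose 2 < (n - 4).choose 2 + 4 := by
  haveI : NeZero n := ⟨by omega⟩
  have hn10 : 10 ≤ n := by omega
  -- cardinality of filters on Fin n by value predicates
  have hcard : ∀ (p : ℕ → Prop) [DecidablePred p],
      (Finset.univ.filter (fun x : Fin n => p x.val)).card
        = ((Finset.range n).filter p).card := by
    intro p _
    apply Finset.card_bij (fun x _ => x.val)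
    · intro a ha
      simp only [Finset.mem_filter, Finset.mem_univ, true_and] at ha
      simp only [Finset.mem_filter, Finset.mem_range]
      exact ⟨a.isLt, ha⟩
    · intro a _ b _ h; exact Fin.ext h
    · intro b hb
      simp only [Finset.mem_filter, Finset.mem_range] at hb
      exact ⟨⟨b, hb.1⟩, by simp [hb.2], rfl⟩
  have hcard_lt : (Finset.univ.filter (fun x : Fin n => x.val < n - 4)).card = n - 4 := by
    refine (hcard (fun v => v < n - 4)).trans ?_
    have h : (Finset.range n).filter (fun v => v < n - 4) = Finset.range (n - 4) := by
      ext y; simp only [Finset.mem_filter, Finset.mem_range]; omega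
    rw [h, Finset.card_range]
  have hcard_ge : (Finset.univ.filter (fun x : Fin n => n - 4 ≤ x.val)).card = 4 := by
    refine (hcard (fun v => n - 4 ≤ v)).trans ?_
    have h : (Finset.range n).filter (fun v => n - 4 ≤ v) = Finset.Ico (n - 4) n := by
      ext y; simp only [Finset.mem_filter, Finset.mem_range, Finset.mem_Ico]; omega
    rw [h, Nat.card_Ico]; omega
  have hcard_mid :
      (Finset.univ.filter (fun x : Fin n => 1 ≤ x.val ∧ x.val < n - 4)).card = n - 5 := by
    refine (hcard (fun v => 1 ≤ v ∧ v < n - 4)).trans ?_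
    have h : (Finset.range n).filter (fun v => 1 ≤ v ∧ v < n - 4) = Finset.Ico 1 (n - 4) := by
      ext y; simp only [Finset.mem_filter, Finset.mem_range, Finset.mem_Ico]; omega
    rw [h, Nat.card_Ico]; omega
  -- structure of edges
  have hEmem : ∀ e ∈ E, e.card = 2 ∧ ∀ x ∈ e, n - 4 ≤ x.val → e = {0, x} := by
    intro e he
    rw [hE, Finset.mem_filter] at he
    obtain ⟨-, i, j, hij, hcond, rfl⟩ := he
    refine ⟨Finset.card_pair hij, ?_⟩
    intro x hx hx4
    rcases Finset.mem_insert.mp hx with rfl | hx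
    · rcases hcond with ⟨h1, h2⟩ | ⟨h1, h2⟩ | ⟨h1, h2⟩
      · omega
      · omega
      · have hj : j = 0 := Fin.ext (by simpa using h1)
        rw [hj, Finset.pair_comm]
    · have hxj : x = j := Finset.mem_singleton.mp hx
      subst hxj
      rcases hcond with ⟨h1, h2⟩ | ⟨h1, h2⟩ | ⟨h1, h2⟩
      · omega
      · have hi : i = 0 := Fin.ext (by simpa using h1)
        rw [hi]
      · omega
  have hS : ∀ B ∈ F, ∃ e ∈ E, B = eᶜ := by
    intro B hB
    rw [hF] at hB
    obtain ⟨e, he, rfl⟩ := Finset.mem_image.mp hB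
    exact ⟨e, he, rfl⟩
  constructor
  · -- no q-simplex (in fact no (q+1)-family with empty intersection)
    rintro ⟨S, hSF, hScard, hinf, -⟩
    have hSedge : ∀ B ∈ S, ∃ e ∈ E, B = eᶜ := fun B hB => hS B (hSF hB)
    have hmem : ∀ x : Fin n, (∀ B ∈ S, x ∈ B) → False := by
      intro x h
      have hle : ({x} : Finset (Fin n)) ≤ S.inf id :=
        Finset.le_inf fun B hB => Finset.singleton_subset_iff.mpr (h B hB)
      rw [hinf] at hle
      exact absurd (hle (Finset.mem_singleton_self x)) (Finset.notMem_empty x)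
    -- the four pendant edges' complements are in S
    have hpend : ∀ p : Fin n, n - 4 ≤ p.val → ({0, p} : Finset (Fin n))ᶜ ∈ S := by
      intro p hp
      by_contra hcon
      apply hmem p
      intro B hB
      obtain ⟨e, he, rfl⟩ := hSedge B hB
      rw [Finset.mem_compl]
      intro hpe
      rw [(hEmem e he).2 p hpe hp] at hB
      exact hcon hB
    set P : Finset (Fin n) := Finset.univ.filter (fun x => n - 4 ≤ x.val) with hP
    have hPcard : P.card = 4 := hcard_ge
    set pend : Finset (Finset (Fin n)) := P.image (fun p => ({0, p} : Finset (Fin n))ᶜ)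
      with hpenddef
    have hpendS : pend ⊆ S := by
      intro B hB
      obtain ⟨p, hp, rfl⟩ := Finset.mem_image.mp hB
      rw [hP, Finset.mem_filter] at hp
      exact hpend p hp.2
    have hpendcard : pend.card = 4 := by
      rw [hpenddef, Finset.card_image_of_injOn, hPcard]
      intro a ha b hb hab
      simp only [Finset.mem_coe, hP, Finset.mem_filter, Finset.mem_univ, true_and] at ha hb
      have h1 : ({0, a} : Finset (Fin n)) = {0, b} := compl_injective hab
      have h2 : a ∈ ({0, b} : Finset (Fin n)) :=
        h1 ▸ Finset.mem_insert_of_mem (Finset.mem_singleton_self a)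
      rcases Finset.mem_insert.mp h2 with h | h
      · exfalso; rw [h] at ha; simp at ha; omega
      · exact Finset.mem_singleton.mp h
    set S' : Finset (Finset (Fin n)) := S \ pend with hS'def
    have hS'card : S'.card = q - 3 := by
      rw [hS'def, Finset.card_sdiff_of_subset hpendS, hScard, hpendcard]; omega
    -- middle vertices must be covered by S'
    set Cmid : Finset (Fin n) := Finset.univ.filter (fun x => 1 ≤ x.val ∧ x.val < n - 4)
      with hCmid
    have hCmidcard : Cmid.card = n - 5 := hcard_mid
    have hcover : Cmid ⊆ S'.biUnion (fun B => Bᶜ) := by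
      intro x hx
      rw [hCmid, Finset.mem_filter] at hx
      obtain ⟨-, hx1, hx4⟩ := hx
      have hex : ∃ B ∈ S, x ∉ B := by
        by_contra h
        push_neg at h
        exact hmem x h
      obtain ⟨B, hBS, hxB⟩ := hex
      rw [Finset.mem_biUnion]
      refine ⟨B, ?_, Finset.mem_compl.mpr hxB⟩
      rw [hS'def, Finset.mem_sdiff]
      refine ⟨hBS, ?_⟩
      intro hBpend
      obtain ⟨p, hp, rfl⟩ := Finset.mem_image.mp hBpend
      rw [hP, Finset.mem_filter] at hp
      have hxmem : x ∈ ({0, p} : Finset (Fin n)) := by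
        rwa [Finset.mem_compl, not_not] at hxB
      rcases Finset.mem_insert.mp hxmem with h | h
      · rw [h] at hx1; simp at hx1
      · rw [Finset.mem_singleton.mp h] at hx4; omega
    have hbound : Cmid.card ≤ 2 * S'.card := by
      calc Cmid.card ≤ (S'.biUnion (fun B => Bᶜ)).card := Finset.card_le_card hcover
        _ ≤ ∑ B ∈ S', Bᶜ.card := Finset.card_biUnion_le
        _ ≤ ∑ _B ∈ S', 2 := by
            apply Finset.sum_le_sum
            intro B hB
            have hBS : B ∈ S := (Finset.mem_sdiff.mp hB).1
            obtain ⟨e, he, rfl⟩ := hSedge B hBS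
            rw [compl_compl]
            exact le_of_eq (hEmem e he).1
        _ = 2 * S'.card := by rw [Finset.sum_const, smul_eq_mul, mul_comm]
    rw [hCmidcard, hS'card] at hbound
    omega
  constructor
  · -- cardinality of F
    have hFE : F.card = E.card := by
      rw [hF]
      exact Finset.card_image_of_injective _ compl_injective
    set C : Finset (Fin n) := Finset.univ.filter (fun x => x.val < n - 4) with hC
    set P : Finset (Fin n) := Finset.univ.filter (fun x => n - 4 ≤ x.val) with hP
    have hCcard : C.card = n - 4 := hcard_lt
    have hPcard : P.card = 4 := hcard_ge
    set cliqueE : Finset (Finset (Fin n)) := C.powersetCard 2 with hcliqueE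
    set pendE : Finset (Finset (Fin n)) := P.image (fun p => ({0, p} : Finset (Fin n)))
      with hpendE
    have hEeq : E = cliqueE ∪ pendE := by
      ext e
      rw [hE, Finset.mem_filter, Finset.mem_union]
      constructor
      · rintro ⟨-, i, j, hij, hcond, rfl⟩
        rcases hcond with ⟨h1, h2⟩ | ⟨h1, h2⟩ | ⟨h1, h2⟩
        · left
          rw [hcliqueE, Finset.mem_powersetCard]
          refine ⟨?_, Finset.card_pair hij⟩
          intro x hx
          rw [hC, Finset.mem_filter]
          rcases Finset.mem_insert.mp hx with rfl | hx
          · exact ⟨Finset.mem_univ _, h1⟩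
          · rw [Finset.mem_singleton.mp hx]; exact ⟨Finset.mem_univ _, h2⟩
        · right
          rw [hpendE, Finset.mem_image]
          refine ⟨j, by rw [hP, Finset.mem_filter]; exact ⟨Finset.mem_univ _, h2⟩, ?_⟩
          have : i = 0 := Fin.ext (by simpa using h1)
          rw [this]
        · right
          rw [hpendE, Finset.mem_image]
          refine ⟨i, by rw [hP, Finset.mem_filter]; exact ⟨Finset.mem_univ _, h2⟩, ?_⟩
          have : j = 0 := Fin.ext (by simpa using h1)
          rw [this, Finset.pair_comm]
      · intro h
        refine ⟨Finset.mem_univ _, ?_⟩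
        rcases h with h | h
        · rw [hcliqueE, Finset.mem_powersetCard] at h
          obtain ⟨hsub, hcard2⟩ := h
          obtain ⟨i, j, hij, rfl⟩ := Finset.card_eq_two.mp hcard2
          refine ⟨i, j, hij, Or.inl ⟨?_, ?_⟩, rfl⟩
          · have := hsub (Finset.mem_insert_self i {j})
            rw [hC, Finset.mem_filter] at this; exact this.2
          · have := hsub (Finset.mem_insert_of_mem (Finset.mem_singleton_self j))
            rw [hC, Finset.mem_filter] at this; exact this.2
        · rw [hpendE, Finset.mem_image] at h
          obtain ⟨p, hp, rfl⟩ := h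
          rw [hP, Finset.mem_filter] at hp
          refine ⟨0, p, ?_, Or.inr (Or.inl ⟨by simp, hp.2⟩), rfl⟩
          intro h0
          rw [← h0] at hp
          have := hp.2
          simp at this; omega
    have hdisj : Disjoint cliqueE pendE := by
      rw [Finset.disjoint_left]
      intro e he1 he2
      rw [hcliqueE, Finset.mem_powersetCard] at he1
      rw [hpendE, Finset.mem_image] at he2
      obtain ⟨p, hp, rfl⟩ := he2
      rw [hP, Finset.mem_filter] at hp
      have hpC := he1.1 (Finset.mem_insert_of_mem (Finset.mem_singleton_self p))
      rw [hC, Finset.mem_filter] at hpC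
      omega
    have hcliquecard : cliqueE.card = (n - 4).choose 2 := by
      rw [hcliqueE, Finset.card_powersetCard, hCcard]
    have hpendcard : pendE.card = 4 := by
      rw [hpendE, Finset.card_image_of_injOn, hPcard]
      intro a ha b hb hab
      simp only [Finset.mem_coe, hP, Finset.mem_filter, Finset.mem_univ, true_and] at ha hb
      have hab' : ({0, a} : Finset (Fin n)) = {0, b} := hab
      have h2 : a ∈ ({0, b} : Finset (Fin n)) := by
        rw [← hab']; exact Finset.mem_insert_of_mem (Finset.mem_singleton_self a)
      rcases Finset.mem_insert.mp h2 with h | h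
      · exfalso; rw [h] at ha; simp at ha; omega
      · exact Finset.mem_singleton.mp h
    rw [hFE, hEeq, Finset.card_union_of_disjoint hdisj, hcliquecard, hpendcard]
  · -- numeric inequality
    have h1 : (q + 1).choose 2 ≤ (n - 4).choose 2 :=
      Nat.choose_le_choose 2 (by omega)
    omega
end

section
/- Let q ≥ 3, n = 2q. In any connected graph G on n vertices such that every edge-subset of E(G) covering all vertices contains a perfect matching, for every perfect matching M of G and every edge u v ∈ M, one of u, v has degree 1 in G. -/
/-- Let `q ≥ 3`, `n = 2q`. In any connected graph `G` on `n` vertices such that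
every edge subset covering all vertices contains a perfect matching, for every
perfect matching `M` of `G` and every edge `s(u,v) ∈ M`, one of `u`, `v` has
degree `1` in `G`. -/
theorem stmt19 (q n : ℕ) (hq : 3 ≤ q) (hn : n = 2 * q)
    (G : SimpleGraph (Fin n)) [DecidableRel G.Adj]
    (hconn : G.Connected)
    (hPM : ∀ E' ⊆ G.edgeFinset, (∀ v : Fin n, ∃ e ∈ E', v ∈ e) →
      ∃ M ⊆ E', ∀ v : Fin n, ∃! e, e ∈ M ∧ v ∈ e)
    (M : Finset (Sym2 (Fin n))) (hM : M ⊆ G.edgeFinset)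
    (hMpm : ∀ v : Fin n, ∃! e, e ∈ M ∧ v ∈ e)
    (u v : Fin n) (huv : s(u, v) ∈ M) :
    G.degree u = 1 ∨ G.degree v = 1 := by
  classical
  by_contra hcon
  push_neg at hcon
  obtain ⟨hdu, hdv⟩ := hcon
  -- basic facts
  have hMadj : ∀ a b : Fin n, s(a, b) ∈ M → G.Adj a b := by
    intro a b h
    exact (SimpleGraph.mem_edgeSet G).mp (SimpleGraph.mem_edgeFinset.mp (hM h))
  have hMuniq : ∀ (a : Fin n) (e f : Sym2 (Fin n)),
      e ∈ M → f ∈ M → a ∈ e → a ∈ f → e = f := by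
    intro a e f he hf hae haf
    obtain ⟨e0, _, hu0⟩ := hMpm a
    rw [hu0 e ⟨he, hae⟩, hu0 f ⟨hf, haf⟩]
  have hedge_ne : ∀ a b c d : Fin n, a ≠ c → a ≠ d → s(a, b) ≠ s(c, d) := by
    intro a b c d h1 h2 h
    rw [Sym2.eq_iff] at h
    rcases h with ⟨h, _⟩ | ⟨h, _⟩
    · exact h1 h
    · exact h2 h
  have hedge_ne2 : ∀ a b c : Fin n, b ≠ c → a ≠ c → s(a, b) ≠ s(a, c) := by
    intro a b c h1 h2 h
    rw [Sym2.eq_iff] at h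
    tauto
  have hadj_uv : G.Adj u v := hMadj u v huv
  have hne_uv : u ≠ v := hadj_uv.ne
  -- the generic contradiction machine
  have kill : ∀ (E' : Finset (Sym2 (Fin n))) (a b p : Fin n) (e₁ e₂ : Sym2 (Fin n)),
      E' ⊆ G.edgeFinset → (∀ t : Fin n, ∃ e ∈ E', t ∈ e) →
      (∀ e ∈ E', a ∈ e → e = e₁) → (∀ e ∈ E', b ∈ e → e = e₂) →
      e₁ ≠ e₂ → p ∈ e₁ → p ∈ e₂ → False := by
    intro E' a b p e₁ e₂ hsub hcov ha hb hne hp1 hp2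
    obtain ⟨M', hM's, hM'pm⟩ := hPM E' hsub hcov
    obtain ⟨ea, ⟨hea, haa⟩, _⟩ := hM'pm a
    obtain ⟨eb, ⟨heb, hbb⟩, _⟩ := hM'pm b
    have h1 : ea = e₁ := ha _ (hM's hea) haa
    have h2 : eb = e₂ := hb _ (hM's heb) hbb
    subst h1
    subst h2
    obtain ⟨ep, _, hup⟩ := hM'pm p
    exact hne ((hup ea ⟨hea, hp1⟩).trans (hup eb ⟨heb, hp2⟩).symm)
  -- get a second neighbor x' of u
  have hdu' : (G.neighborFinset u).card ≠ 1 := hdu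
  have hdv' : (G.neighborFinset v).card ≠ 1 := hdv
  have hupos : 0 < (G.neighborFinset u).card :=
    Finset.card_pos.mpr ⟨v, (G.mem_neighborFinset u v).mpr hadj_uv⟩
  have hvpos : 0 < (G.neighborFinset v).card :=
    Finset.card_pos.mpr ⟨u, (G.mem_neighborFinset v u).mpr hadj_uv.symm⟩
  obtain ⟨x', hx'mem, hx'v⟩ :=
    Finset.exists_mem_ne (by omega : 1 < (G.neighborFinset u).card) v
  have hx'u : G.Adj u x' := (G.mem_neighborFinset u x').mp hx'mem
  obtain ⟨z, hzmem, hzu⟩ :=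
    Finset.exists_mem_ne (by omega : 1 < (G.neighborFinset v).card) u
  have hadj_vz : G.Adj v z := (G.mem_neighborFinset v z).mp hzmem
  have hzv : z ≠ v := hadj_vz.ne'
  -- the matching partner x of z
  obtain ⟨ez, ⟨hezM, hzez⟩, _⟩ := hMpm z
  obtain ⟨x, rfl⟩ : ∃ b, ez = s(z, b) := hzez
  have hMzx : s(z, x) ∈ M := hezM
  have hadj_zx : G.Adj z x := hMadj z x hMzx
  have hxz : x ≠ z := hadj_zx.ne'
  have hxu : x ≠ u := by
    intro h
    have h2 := hMuniq u s(z, x) s(u, v) hMzx huv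
      (Sym2.mem_iff.mpr (Or.inr h.symm)) (Sym2.mem_iff.mpr (Or.inl rfl))
    rw [Sym2.eq_iff] at h2
    rcases h2 with ⟨h1, _⟩ | ⟨h1, _⟩
    · exact hzu h1
    · exact hzv h1
  have hxv : x ≠ v := by
    intro h
    have h2 := hMuniq v s(z, x) s(u, v) hMzx huv
      (Sym2.mem_iff.mpr (Or.inr h.symm)) (Sym2.mem_iff.mpr (Or.inr rfl))
    rw [Sym2.eq_iff] at h2
    rcases h2 with ⟨h1, _⟩ | ⟨h1, _⟩
    · exact hzu h1
    · exact hzv h1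
  -- Case C : x has a neighbor w ∉ {u, z}
  by_cases hC : ∃ w, G.Adj x w ∧ w ≠ u ∧ w ≠ z
  · obtain ⟨w, hxw, hwu, hwz⟩ := hC
    refine kill (insert s(x, w) (insert s(z, v) (M.erase s(z, x)))) z u v
      s(z, v) s(u, v) ?_ ?_ ?_ ?_ ?_ (by simp) (by simp)
    · intro e he
      simp only [Finset.mem_insert, Finset.mem_erase] at he
      rcases he with rfl | rfl | ⟨_, heM⟩
      · exact SimpleGraph.mem_edgeFinset.mpr ((G.mem_edgeSet).mpr hxw)
      · exact SimpleGraph.mem_edgeFinset.mpr ((G.mem_edgeSet).mpr hadj_vz.symm)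
      · exact hM heM
    · intro t
      by_cases htu : t = u
      · exact ⟨s(u, v), by
          simp only [Finset.mem_insert, Finset.mem_erase]
          exact Or.inr (Or.inr ⟨hedge_ne u v z x (Ne.symm hzu) (Ne.symm hxu), huv⟩),
          by simp [htu]⟩
      by_cases htv : t = v
      · exact ⟨s(z, v), by simp, by simp [htv]⟩
      by_cases htx : t = x
      · exact ⟨s(x, w), by simp, by simp [htx]⟩
      by_cases htz : t = z
      · exact ⟨s(z, v), by simp, by simp [htz]⟩
      obtain ⟨e, ⟨heM, hte⟩, _⟩ := hMpm t
      refine ⟨e, ?_, hte⟩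
      simp only [Finset.mem_insert, Finset.mem_erase]
      refine Or.inr (Or.inr ⟨?_, heM⟩)
      rintro rfl
      rw [Sym2.mem_iff] at hte
      tauto
    · intro e he hze
      simp only [Finset.mem_insert, Finset.mem_erase] at he
      rcases he with rfl | rfl | ⟨hed, heM⟩
      · rw [Sym2.mem_iff] at hze
        rcases hze with rfl | rfl
        · exact absurd rfl hxz
        · exact absurd rfl hwz
      · rfl
      · exact absurd (hMuniq z e s(z, x) heM hMzx hze (by simp)) hed
    · intro e he hue
      simp only [Finset.mem_insert, Finset.mem_erase] at he
      rcases he with rfl | rfl | ⟨hed, heM⟩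
      · rw [Sym2.mem_iff] at hue
        rcases hue with rfl | rfl
        · exact absurd rfl hxu
        · exact absurd rfl hwu
      · rw [Sym2.mem_iff] at hue
        rcases hue with rfl | rfl
        · exact absurd rfl hzu
        · exact absurd rfl hne_uv
      · exact hMuniq u e s(u, v) heM huv hue (by simp)
    · exact hedge_ne z v u v hzu hzv
  -- now N(x) ⊆ {u, z}
  push_neg at hC
  by_cases hux : G.Adj u x
  case neg =>
    -- Case A : u not adjacent to x
    refine kill (insert s(u, x') (insert s(z, v) (M.erase s(u, v)))) x v z
      s(z, x) s(z, v) ?_ ?_ ?_ ?_ ?_ (by simp) (by simp)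
    · intro e he
      simp only [Finset.mem_insert, Finset.mem_erase] at he
      rcases he with rfl | rfl | ⟨_, heM⟩
      · exact SimpleGraph.mem_edgeFinset.mpr ((G.mem_edgeSet).mpr hx'u)
      · exact SimpleGraph.mem_edgeFinset.mpr ((G.mem_edgeSet).mpr hadj_vz.symm)
      · exact hM heM
    · intro t
      by_cases htu : t = u
      · exact ⟨s(u, x'), by simp, by simp [htu]⟩
      by_cases htv : t = v
      · exact ⟨s(z, v), by simp, by simp [htv]⟩
      by_cases htx : t = x
      · exact ⟨s(z, x), by
          simp only [Finset.mem_insert, Finset.mem_erase]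
          exact Or.inr (Or.inr ⟨hedge_ne z x u v hzu hzv, hMzx⟩),
          by simp [htx]⟩
      by_cases htz : t = z
      · exact ⟨s(z, v), by simp, by simp [htz]⟩
      obtain ⟨e, ⟨heM, hte⟩, _⟩ := hMpm t
      refine ⟨e, ?_, hte⟩
      simp only [Finset.mem_insert, Finset.mem_erase]
      refine Or.inr (Or.inr ⟨?_, heM⟩)
      rintro rfl
      rw [Sym2.mem_iff] at hte
      tauto
    · intro e he hxe
      simp only [Finset.mem_insert, Finset.mem_erase] at he
      rcases he with rfl | rfl | ⟨hed, heM⟩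
      · rw [Sym2.mem_iff] at hxe
        rcases hxe with rfl | rfl
        · exact absurd rfl hxu
        · exact absurd hx'u hux
      · rw [Sym2.mem_iff] at hxe
        rcases hxe with rfl | rfl
        · exact absurd rfl hxz
        · exact absurd rfl hxv
      · exact hMuniq x e s(z, x) heM hMzx hxe (by simp)
    · intro e he hve
      simp only [Finset.mem_insert, Finset.mem_erase] at he
      rcases he with rfl | rfl | ⟨hed, heM⟩
      · rw [Sym2.mem_iff] at hve
        rcases hve with rfl | rfl
        · exact absurd rfl (Ne.symm hne_uv)
        · exact absurd rfl (Ne.symm hx'v)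
      · rfl
      · exact absurd (hMuniq v e s(u, v) heM huv hve (by simp)) hed
    · exact hedge_ne2 z x v hxv hzv
  case pos =>
  -- u ~ x; symmetric Case C' : z has a neighbor w ∉ {v, x}
  by_cases hC' : ∃ w, G.Adj z w ∧ w ≠ v ∧ w ≠ x
  · obtain ⟨w, hzw, hwv, hwx⟩ := hC'
    refine kill (insert s(z, w) (insert s(x, u) (M.erase s(z, x)))) x v u
      s(x, u) s(u, v) ?_ ?_ ?_ ?_ ?_ (by simp) (by simp)
    · intro e he
      simp only [Finset.mem_insert, Finset.mem_erase] at he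
      rcases he with rfl | rfl | ⟨_, heM⟩
      · exact SimpleGraph.mem_edgeFinset.mpr ((G.mem_edgeSet).mpr hzw)
      · exact SimpleGraph.mem_edgeFinset.mpr ((G.mem_edgeSet).mpr hux.symm)
      · exact hM heM
    · intro t
      by_cases htu : t = u
      · exact ⟨s(x, u), by simp, by simp [htu]⟩
      by_cases htv : t = v
      · exact ⟨s(u, v), by
          simp only [Finset.mem_insert, Finset.mem_erase]
          exact Or.inr (Or.inr ⟨hedge_ne u v z x (Ne.symm hzu) (Ne.symm hxu), huv⟩),
          by simp [htv]⟩
      by_cases htx : t = x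
      · exact ⟨s(x, u), by simp, by simp [htx]⟩
      by_cases htz : t = z
      · exact ⟨s(z, w), by simp, by simp [htz]⟩
      obtain ⟨e, ⟨heM, hte⟩, _⟩ := hMpm t
      refine ⟨e, ?_, hte⟩
      simp only [Finset.mem_insert, Finset.mem_erase]
      refine Or.inr (Or.inr ⟨?_, heM⟩)
      rintro rfl
      rw [Sym2.mem_iff] at hte
      tauto
    · intro e he hxe
      simp only [Finset.mem_insert, Finset.mem_erase] at he
      rcases he with rfl | rfl | ⟨hed, heM⟩
      · rw [Sym2.mem_iff] at hxe
        rcases hxe with rfl | rfl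
        · exact absurd rfl hxz
        · exact absurd rfl (Ne.symm hwx)
      · rfl
      · exact absurd (hMuniq x e s(z, x) heM hMzx hxe (by simp)) hed
    · intro e he hve
      simp only [Finset.mem_insert, Finset.mem_erase] at he
      rcases he with rfl | rfl | ⟨hed, heM⟩
      · rw [Sym2.mem_iff] at hve
        rcases hve with rfl | rfl
        · exact absurd rfl (Ne.symm hzv)
        · exact absurd rfl (Ne.symm hwv)
      · rw [Sym2.mem_iff] at hve
        rcases hve with rfl | rfl
        · exact absurd rfl (Ne.symm hxv)
        · exact absurd rfl (Ne.symm hne_uv)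
      · exact hMuniq v e s(u, v) heM huv hve (by simp)
    · exact hedge_ne x u u v hxu hxv
  push_neg at hC'
  -- Case B : v has a neighbor c ∉ {u, x, z}
  by_cases hB : ∃ c, G.Adj v c ∧ c ≠ u ∧ c ≠ x ∧ c ≠ z
  · obtain ⟨c, hvc, hcu, hcx, hcz⟩ := hB
    refine kill (insert s(u, x) (insert s(v, c) (M.erase s(u, v)))) u z x
      s(u, x) s(z, x) ?_ ?_ ?_ ?_ ?_ (by simp) (by simp)
    · intro e he
      simp only [Finset.mem_insert, Finset.mem_erase] at he
      rcases he with rfl | rfl | ⟨_, heM⟩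
      · exact SimpleGraph.mem_edgeFinset.mpr ((G.mem_edgeSet).mpr hux)
      · exact SimpleGraph.mem_edgeFinset.mpr ((G.mem_edgeSet).mpr hvc)
      · exact hM heM
    · intro t
      by_cases htu : t = u
      · exact ⟨s(u, x), by simp, by simp [htu]⟩
      by_cases htv : t = v
      · exact ⟨s(v, c), by simp, by simp [htv]⟩
      by_cases htx : t = x
      · exact ⟨s(u, x), by simp, by simp [htx]⟩
      by_cases htz : t = z
      · exact ⟨s(z, x), by
          simp only [Finset.mem_insert, Finset.mem_erase]
          exact Or.inr (Or.inr ⟨hedge_ne z x u v hzu hzv, hMzx⟩),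
          by simp [htz]⟩
      obtain ⟨e, ⟨heM, hte⟩, _⟩ := hMpm t
      refine ⟨e, ?_, hte⟩
      simp only [Finset.mem_insert, Finset.mem_erase]
      refine Or.inr (Or.inr ⟨?_, heM⟩)
      rintro rfl
      rw [Sym2.mem_iff] at hte
      tauto
    · intro e he hue
      simp only [Finset.mem_insert, Finset.mem_erase] at he
      rcases he with rfl | rfl | ⟨hed, heM⟩
      · rfl
      · rw [Sym2.mem_iff] at hue
        rcases hue with rfl | rfl
        · exact absurd rfl hne_uv
        · exact absurd rfl (Ne.symm hcu)
      · exact absurd (hMuniq u e s(u, v) heM huv hue (by simp)) hed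
    · intro e he hze
      simp only [Finset.mem_insert, Finset.mem_erase] at he
      rcases he with rfl | rfl | ⟨hed, heM⟩
      · rw [Sym2.mem_iff] at hze
        rcases hze with rfl | rfl
        · exact absurd rfl hzu
        · exact absurd rfl (Ne.symm hxz)
      · rw [Sym2.mem_iff] at hze
        rcases hze with rfl | rfl
        · exact absurd rfl hzv
        · exact absurd rfl (Ne.symm hcz)
      · exact hMuniq z e s(z, x) heM hMzx hze (by simp)
    · exact hedge_ne u x z x (Ne.symm hzu) (Ne.symm hxu)
  push_neg at hB
  -- Case B' : u has a neighbor c ∉ {v, x, z}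
  by_cases hB' : ∃ c, G.Adj u c ∧ c ≠ v ∧ c ≠ x ∧ c ≠ z
  · obtain ⟨c, huc, hcv, hcx, hcz⟩ := hB'
    refine kill (insert s(z, v) (insert s(u, c) (M.erase s(u, v)))) v x z
      s(z, v) s(z, x) ?_ ?_ ?_ ?_ ?_ (by simp) (by simp)
    · intro e he
      simp only [Finset.mem_insert, Finset.mem_erase] at he
      rcases he with rfl | rfl | ⟨_, heM⟩
      · exact SimpleGraph.mem_edgeFinset.mpr ((G.mem_edgeSet).mpr hadj_vz.symm)
      · exact SimpleGraph.mem_edgeFinset.mpr ((G.mem_edgeSet).mpr huc)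
      · exact hM heM
    · intro t
      by_cases htu : t = u
      · exact ⟨s(u, c), by simp, by simp [htu]⟩
      by_cases htv : t = v
      · exact ⟨s(z, v), by simp, by simp [htv]⟩
      by_cases htx : t = x
      · exact ⟨s(z, x), by
          simp only [Finset.mem_insert, Finset.mem_erase]
          exact Or.inr (Or.inr ⟨hedge_ne z x u v hzu hzv, hMzx⟩),
          by simp [htx]⟩
      by_cases htz : t = z
      · exact ⟨s(z, v), by simp, by simp [htz]⟩
      obtain ⟨e, ⟨heM, hte⟩, _⟩ := hMpm t
      refine ⟨e, ?_, hte⟩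
      simp only [Finset.mem_insert, Finset.mem_erase]
      refine Or.inr (Or.inr ⟨?_, heM⟩)
      rintro rfl
      rw [Sym2.mem_iff] at hte
      tauto
    · intro e he hve
      simp only [Finset.mem_insert, Finset.mem_erase] at he
      rcases he with rfl | rfl | ⟨hed, heM⟩
      · rfl
      · rw [Sym2.mem_iff] at hve
        rcases hve with rfl | rfl
        · exact absurd rfl (Ne.symm hne_uv)
        · exact absurd rfl (Ne.symm hcv)
      · exact absurd (hMuniq v e s(u, v) heM huv hve (by simp)) hed
    · intro e he hxe
      simp only [Finset.mem_insert, Finset.mem_erase] at he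
      rcases he with rfl | rfl | ⟨hed, heM⟩
      · rw [Sym2.mem_iff] at hxe
        rcases hxe with rfl | rfl
        · exact absurd rfl hxz
        · exact absurd rfl hxv
      · rw [Sym2.mem_iff] at hxe
        rcases hxe with rfl | rfl
        · exact absurd rfl hxu
        · exact absurd rfl (Ne.symm hcx)
      · exact hMuniq x e s(z, x) heM hMzx hxe (by simp)
    · exact hedge_ne2 z v x (Ne.symm hxv) (Ne.symm hxz)
  push_neg at hB'
  -- Final case : {u, v, x, z} is closed under adjacency, contradicting connectivity
  have hS : ∀ a c : Fin n, G.Adj a c → a ∈ ({u, v, x, z} : Finset (Fin n)) →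
      c ∈ ({u, v, x, z} : Finset (Fin n)) := by
    intro a c hac haS
    simp only [Finset.mem_insert, Finset.mem_singleton] at haS ⊢
    rcases haS with rfl | rfl | rfl | rfl
    · -- a = u
      by_cases h1 : c = v
      · tauto
      by_cases h2 : c = x
      · tauto
      exact Or.inr (Or.inr (Or.inr (hB' c hac h1 h2)))
    · -- a = v
      by_cases h1 : c = u
      · tauto
      by_cases h2 : c = x
      · tauto
      exact Or.inr (Or.inr (Or.inr (hB c hac h1 h2)))
    · -- a = x
      by_cases h1 : c = u
      · tauto
      exact Or.inr (Or.inr (Or.inr (hC c hac h1)))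
    · -- a = z
      by_cases h1 : c = v
      · tauto
      exact Or.inr (Or.inr (Or.inl (hC' c hac h1)))
  have hwalk : ∀ (a c : Fin n) (p : G.Walk a c),
      a ∈ ({u, v, x, z} : Finset (Fin n)) → c ∈ ({u, v, x, z} : Finset (Fin n)) := by
    intro a c p
    induction p with
    | nil => exact id
    | cons h q ih => exact fun ha => ih (hS _ _ h ha)
  have huniv : (Finset.univ : Finset (Fin n)) ⊆ ({u, v, x, z} : Finset (Fin n)) := by
    intro t _
    obtain ⟨p⟩ := hconn.preconnected u t
    exact hwalk u t p (by simp)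
  have hcard : n ≤ ({u, v, x, z} : Finset (Fin n)).card := by
    have h := Finset.card_le_card huniv
    rwa [Finset.card_univ, Fintype.card_fin] at h
  have h4 : ({u, v, x, z} : Finset (Fin n)).card ≤ 4 := by
    have h1 := Finset.card_insert_le u ({v, x, z} : Finset (Fin n))
    have h2 := Finset.card_insert_le v ({x, z} : Finset (Fin n))
    have h3 := Finset.card_insert_le x ({z} : Finset (Fin n))
    have h5 : ({z} : Finset (Fin n)).card = 1 := Finset.card_singleton z
    omega
  omega
end
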